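/- Let A = kQ/I be a monomial algebra and p a nonzero nontrivial path in A. Then there is a short exact sequence of left A-modules 0 → ⊕_{q ∈ L(p)} Aq → Ae_{t(p)} → Ap → 0, where the first map is the inclusion and the second sends e_{t(p)} to p; moreover Ae_{t(p)} → Ap is a projective cover. -/

import Mathlib

universe u v w

/-- A presentation of the `k`-algebra `A` as a monomial algebra `kQ/I` on the quiver
with vertex type `V`: `ι` sends each path of `Q` to its canonical image in `A`
(with `ι (p.comp q) = ι q * ι p`, so that the paper's concatenation `pq`, defined when
`s(p) = t(q)`, corresponds to the product `ι p * ι q`), and `Z p` means `p ∈ I`. -/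
structure MonomialPresentation (k : Type u) (A : Type v) (V : Type w)
    [Field k] [Ring A] [Algebra k A] [Quiver.{w} V] [Fintype V] : Type (max u v w) where
  ι : ∀ {i j : V}, Quiver.Path i j → A
  Z : ∀ {i j : V}, Quiver.Path i j → Prop
  zero_iff : ∀ {i j : V} (p : Quiver.Path i j), ι p = 0 ↔ Z p
  mul_comp : ∀ {i j l : V} (p : Quiver.Path i j) (q : Quiver.Path j l),
    ι (p.comp q) = ι q * ι p
  orth : ∀ i j : V, i ≠ j →
    ι (Quiver.Path.nil : Quiver.Path i i) * ι (Quiver.Path.nil : Quiver.Path j j) = 0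
  sum_one : (∑ i : V, ι (Quiver.Path.nil : Quiver.Path i i)) = 1
  len_two : ∀ {i j : V} (p : Quiver.Path i j), Z p → 2 ≤ p.length
  admissible : ∃ d : ℕ, ∀ {i j : V} (p : Quiver.Path i j), d ≤ p.length → Z p
  z_mul : ∀ {i j l : V} (p : Quiver.Path i j) (q : Quiver.Path j l),
    Z p ∨ Z q → Z (p.comp q)
  indep : LinearIndependent k
    (fun x : {y : Σ i j : V, Quiver.Path i j // ¬ Z y.2.2} => ι x.1.2.2)
  span_top : Submodule.span k
    (Set.range (fun x : Σ i j : V, Quiver.Path i j => ι x.2.2)) = ⊤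

/-- The type of paths of a quiver, bundled with their endpoints. -/
abbrev PathIn (V : Type w) [Quiver.{w} V] : Type w := Σ i j : V, Quiver.Path i j

/-- The type of arrows of a quiver, bundled with their endpoints. -/
abbrev ArrowIn (V : Type w) [Quiver.{w} V] : Type w := Σ i j : V, (i ⟶ j)

/-- `x` is a sub-path of `y`. -/
def IsSubpathIn {V : Type w} [Quiver.{w} V] (x y : PathIn V) : Prop :=
  ∃ (r : Quiver.Path y.1 x.1) (s : Quiver.Path x.2.1 y.2.1),
    y.2.2 = (r.comp x.2.2).comp s

namespace MonomialPresentation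

variable {k : Type u} {A : Type v} {V : Type w}
  [Field k] [Ring A] [Algebra k A] [Quiver.{w} V] [Fintype V]
  (P : MonomialPresentation k A V)

/-- `L(p)`: the right-minimal paths `q` among the nonzero paths with
`s(q) = t(p)` and `qp = 0` in `A`. -/
def LSet {i j : V} (p : Quiver.Path i j) : Set (PathIn V) :=
  {q | ¬ P.Z q.2.2 ∧ q.1 = j ∧ P.ι q.2.2 * P.ι p = 0 ∧
    ¬ ∃ r u : PathIn V, ¬ P.Z r.2.2 ∧ r.1 = j ∧ P.ι r.2.2 * P.ι p = 0 ∧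
      1 ≤ u.2.2.length ∧ P.ι q.2.2 = P.ι u.2.2 * P.ι r.2.2}

/-- `R(p)`: the left-minimal paths `q` among the nonzero paths with
`t(q) = s(p)` and `pq = 0` in `A`. -/
def RSet {i j : V} (p : Quiver.Path i j) : Set (PathIn V) :=
  {q | ¬ P.Z q.2.2 ∧ q.2.1 = i ∧ P.ι p * P.ι q.2.2 = 0 ∧
    ¬ ∃ r u : PathIn V, ¬ P.Z r.2.2 ∧ r.2.1 = i ∧ P.ι p * P.ι r.2.2 = 0 ∧
      1 ≤ u.2.2.length ∧ P.ι q.2.2 = P.ι r.2.2 * P.ι u.2.2}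

/-- A perfect pair `(p, q)` of nonzero nontrivial paths with `s(p) = t(q)`:
`pq = 0`, `R(p) = {q}` and `L(q) = {p}`. -/
def PerfectPair {i j l : V} (p : Quiver.Path i j) (q : Quiver.Path l i) : Prop :=
  1 ≤ p.length ∧ 1 ≤ q.length ∧ ¬ P.Z p ∧ ¬ P.Z q ∧ P.Z (q.comp p) ∧
  (∀ (m : V) (q' : Quiver.Path m i), ¬ P.Z q' → P.Z (q'.comp p) →
    ∃ x : Quiver.Path m l, q' = x.comp q) ∧
  (∀ (m : V) (p' : Quiver.Path i m), ¬ P.Z p' → P.Z (q.comp p') →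
    ∃ y : Quiver.Path j m, p' = p.comp y)

/-- The perfect pair relation on bundled paths. -/
def PerfectPairS (x y : PathIn V) : Prop :=
  ∃ (i j l : V) (p : Quiver.Path i j) (q : Quiver.Path l i),
    x = ⟨i, j, p⟩ ∧ y = ⟨l, i, q⟩ ∧ P.PerfectPair p q

/-- A perfect path: a nonzero path `p` admitting a sequence
`p = p₁, p₂, …, pₙ, pₙ₊₁ = p` in which all consecutive pairs are perfect. -/
def IsPerfectPath (x : PathIn V) : Prop :=
  ∃ (n : ℕ) (c : Fin (n + 2) → PathIn V), c 0 = x ∧ c (Fin.last (n + 1)) = x ∧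
    ∀ m : Fin (n + 1), P.PerfectPairS (c m.castSucc) (c m.succ)

/-- `x ∈ F`: `x` is a minimal path contained in the ideal `I`. -/
def InF (x : PathIn V) : Prop :=
  P.Z x.2.2 ∧ ∀ y : PathIn V, IsSubpathIn y x → y ≠ x → ¬ P.Z y.2.2

/-- The algebra is quadratic monomial: all minimal relations have length two. -/
def Quadratic : Prop := ∀ x : PathIn V, P.InF x → x.2.2.length = 2

/-- The arrow relation of the relation quiver `R_A`: there is an arrow
`α → β` when `t(α) = s(β)` and `βα ∈ F`. -/
def RQ (x y : ArrowIn V) : Prop :=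
  ∃ (i j l : V) (α : i ⟶ j) (β : j ⟶ l), x = ⟨i, j, α⟩ ∧ y = ⟨j, l, β⟩ ∧
    P.InF ⟨i, l, (α.toPath).comp β.toPath⟩

/-- The two vertices of the relation quiver lie in the same connected component. -/
def Conn (x y : ArrowIn V) : Prop :=
  Relation.ReflTransGen (fun a b => P.RQ a b ∨ P.RQ b a) x y

/-- The connected component of `x` in the relation quiver is a basic cycle:
every vertex of the component has a unique successor and a unique predecessor. -/
def InPerfectComponent (x : ArrowIn V) : Prop :=
  ∀ y : ArrowIn V, P.Conn x y → (∃! z, P.RQ y z) ∧ (∃! z, P.RQ z y)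

/-- The connected component of `x` in the relation quiver contains no oriented cycle. -/
def InAcyclicComponent (x : ArrowIn V) : Prop :=
  ∀ y : ArrowIn V, P.Conn x y → ¬ Relation.TransGen P.RQ y y

end MonomialPresentation

/-- The quiver is a basic `n`-cycle. -/
def IsBasicCycleQuiver (V : Type w) [Quiver.{w} V] : Prop :=
  ∃ n : ℕ, 0 < n ∧ ∃ f : V ≃ ZMod n,
    (∀ i j : V, Nonempty (i ⟶ j) ↔ f j = f i + 1) ∧
    (∀ (i j : V) (a b : i ⟶ j), a = b)

/-- The underlying graph of the quiver is connected. -/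
def QuiverConnected (V : Type w) [Quiver.{w} V] : Prop :=
  Nonempty V ∧ ∀ i j : V,
    Relation.ReflTransGen (fun a b => Nonempty (a ⟶ b) ∨ Nonempty (b ⟶ a)) i j

/-- The quiver has no sources. -/
def NoSources (V : Type w) [Quiver.{w} V] : Prop := ∀ j : V, ∃ i : V, Nonempty (i ⟶ j)

/-- The quiver has no sinks. -/
def NoSinks (V : Type w) [Quiver.{w} V] : Prop := ∀ i : V, ∃ j : V, Nonempty (i ⟶ j)

namespace MonomialPresentation

open Quiver Submodule

variable {k : Type u} {A : Type v} {V : Type w}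
  [Field k] [Ring A] [Algebra k A] [Quiver.{w} V] [Fintype V]
  (P : MonomialPresentation k A V)

lemma ι_mul_nil {a b : V} (p : Quiver.Path a b) :
    P.ι p * P.ι (Quiver.Path.nil : Quiver.Path a a) = P.ι p := by
  conv_rhs => rw [← Quiver.Path.nil_comp p, P.mul_comp]

lemma nil_mul_ι {a b : V} (p : Quiver.Path a b) :
    P.ι (Quiver.Path.nil : Quiver.Path b b) * P.ι p = P.ι p := by
  conv_rhs => rw [← Quiver.Path.comp_nil p, P.mul_comp]

lemma ι_mul_ι_of_ne {a b c d : V} (x : Quiver.Path a b) (y : Quiver.Path c d)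
    (h : a ≠ d) : P.ι x * P.ι y = 0 := by
  have h1 := P.ι_mul_nil x
  have h2 := P.nil_mul_ι y
  calc P.ι x * P.ι y
      = (P.ι x * P.ι (Quiver.Path.nil : Quiver.Path a a)) *
        (P.ι (Quiver.Path.nil : Quiver.Path d d) * P.ι y) := by rw [h1, h2]
    _ = P.ι x * ((P.ι (Quiver.Path.nil : Quiver.Path a a) *
          P.ι (Quiver.Path.nil : Quiver.Path d d)) * P.ι y) := by
        simp only [mul_assoc]
    _ = 0 := by rw [P.orth a d h, zero_mul, mul_zero]

/-- The basis of `A` given by the nonzero paths. -/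
noncomputable def basis : Module.Basis {y : PathIn V // ¬ P.Z y.2.2} k A :=
  Module.Basis.mk P.indep (by
    have h1 : Submodule.span k (Set.range (fun x : PathIn V => P.ι x.2.2)) ≤
        Submodule.span k (Set.range
          (fun x : {y : PathIn V // ¬ P.Z y.2.2} => P.ι x.1.2.2)) := by
      refine Submodule.span_le.2 ?_
      rintro _ ⟨x, rfl⟩
      dsimp only
      by_cases h : P.Z x.2.2
      · rw [(P.zero_iff _).2 h]; exact Submodule.zero_mem _
      · exact Submodule.subset_span ⟨⟨x, h⟩, rfl⟩
    rw [← P.span_top]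
    exact h1)

lemma ι_inj {x y : PathIn V} (hx : ¬ P.Z x.2.2) (h : P.ι x.2.2 = P.ι y.2.2) : x = y := by
  by_cases hy : P.Z y.2.2
  · exact absurd ((P.zero_iff _).1 (h.trans ((P.zero_iff _).2 hy))) hx
  · have := P.indep.injective (a₁ := ⟨x, hx⟩) (a₂ := ⟨y, hy⟩) h
    exact congrArg Subtype.val this

lemma li_fam {γ : Type*} (t : Finset γ) (e : γ → PathIn V)
    (hinj : Set.InjOn e t) (hz : ∀ u ∈ t, ¬ P.Z (e u).2.2)
    (c : γ → k) (h : ∑ u ∈ t, c u • P.ι (e u).2.2 = 0) : ∀ u ∈ t, c u = 0 := by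
  have li : LinearIndependent k (fun u : {x // x ∈ t} => P.ι (e u.1).2.2) := by
    have heq : (fun u : {x // x ∈ t} => P.ι (e u.1).2.2)
        = (fun x : {y : PathIn V // ¬ P.Z y.2.2} => P.ι x.1.2.2)
          ∘ (fun u : {x // x ∈ t} => (⟨e u.1, hz u.1 u.2⟩ : {y : PathIn V // ¬ P.Z y.2.2})) := rfl
    rw [heq]
    exact P.indep.comp _ (fun u u' huu => Subtype.ext
      (hinj u.2 u'.2 (congrArg Subtype.val huu)))
  intro u hu
  rw [← Finset.sum_attach t (fun u => c u • P.ι (e u).2.2)] at h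
  exact linearIndependent_iff'.1 li t.attach (fun u => c u.1) h ⟨u, hu⟩ (Finset.mem_attach _ _)

end MonomialPresentation
namespace MonomialPresentation

open Quiver Submodule

variable {k : Type u} {A : Type v} {V : Type w}
  [Field k] [Ring A] [Algebra k A] [Quiver.{w} V] [Fintype V]
  (P : MonomialPresentation k A V)

open scoped Classical in
/-- Compose `p` on the right of a bundled path starting at the target of `p`. -/
noncomputable def eMap {i j : V} (p : Quiver.Path i j) (w : PathIn V) : PathIn V :=
  if h : w.1 = j then ⟨i, w.2.1, p.comp (h ▸ w.2.2)⟩ else w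

lemma eMap_spec {i j : V} (p : Quiver.Path i j) {l : V} (q : Quiver.Path j l) :
    eMap p ⟨j, l, q⟩ = ⟨i, l, p.comp q⟩ := by
  unfold eMap
  rw [dif_pos rfl]

lemma comp_bundled_inj {i j : V} (p : Quiver.Path i j) {l l' : V}
    {u : Quiver.Path j l} {u' : Quiver.Path j l'}
    (h : (⟨i, l, p.comp u⟩ : PathIn V) = ⟨i, l', p.comp u'⟩) :
    (⟨j, l, u⟩ : PathIn V) = ⟨j, l', u'⟩ := by
  obtain ⟨-, h2⟩ := Sigma.mk.inj_iff.1 h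
  obtain ⟨rfl, h3⟩ := Sigma.mk.inj_iff.1 (eq_of_heq h2)
  have h4 := p.comp_injective_right (eq_of_heq h3)
  rw [h4]

lemma ι_src_eq {a b c d : V} (x : Quiver.Path a b) (y : Quiver.Path c d)
    (h : P.ι x * P.ι y ≠ 0) : a = d :=
  by_contra fun hne => h (P.ι_mul_ι_of_ne x y hne)

lemma mem_span_ann {i j : V} (p : Quiver.Path i j) (x : A) (hx : x * P.ι p = 0) :
    x ∈ Submodule.span k
      {a : A | ∃ w : PathIn V, ¬ P.Z w.2.2 ∧ P.ι w.2.2 * P.ι p = 0 ∧ a = P.ι w.2.2} := by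
  classical
  set G := {a : A | ∃ w : PathIn V, ¬ P.Z w.2.2 ∧ P.ι w.2.2 * P.ι p = 0 ∧ a = P.ι w.2.2}
    with hG
  set c : {y : PathIn V // ¬ P.Z y.2.2} → k := fun w => (P.basis.repr x) w with hc
  have hrepr : x = ∑ w ∈ (P.basis.repr x).support, c w • P.ι w.1.2.2 := by
    conv_lhs => rw [← P.basis.linearCombination_repr x]
    rw [Finsupp.linearCombination_apply, Finsupp.sum]
    refine Finset.sum_congr rfl fun w _ => ?_
    rw [hc]
    congr 1
    rw [basis, Module.Basis.mk_apply]
  set s := (P.basis.repr x).support with hs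
  set s0 := s.filter (fun w => P.ι w.1.2.2 * P.ι p = 0) with hs0
  set s1 := s.filter (fun w => ¬ (P.ι w.1.2.2 * P.ι p = 0)) with hs1
  have hsplit : x = (∑ w ∈ s0, c w • P.ι w.1.2.2) + (∑ w ∈ s1, c w • P.ι w.1.2.2) := by
    rw [hrepr, hs0, hs1]
    exact (Finset.sum_filter_add_sum_filter_not s _ _).symm
  have h0 : (∑ w ∈ s0, c w • P.ι w.1.2.2) ∈ Submodule.span k G := by
    refine Submodule.sum_mem _ fun w hw => Submodule.smul_mem _ _ (Submodule.subset_span ?_)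
    exact ⟨w.1, w.2, (Finset.mem_filter.1 hw).2, rfl⟩
  have h0p : (∑ w ∈ s0, c w • P.ι w.1.2.2) * P.ι p = 0 := by
    rw [Finset.sum_mul]
    refine Finset.sum_eq_zero fun w hw => ?_
    rw [smul_mul_assoc, (Finset.mem_filter.1 hw).2, smul_zero]
  set e : {y : PathIn V // ¬ P.Z y.2.2} → PathIn V := fun w => eMap p w.1 with he
  have hkey : ∀ w : {y : PathIn V // ¬ P.Z y.2.2}, ¬ (P.ι w.1.2.2 * P.ι p = 0) →
      P.ι (e w).2.2 = P.ι w.1.2.2 * P.ι p := by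
    rintro ⟨⟨a, l, q⟩, hz⟩ hne
    have ha : a = j := P.ι_src_eq q p hne
    subst ha
    show P.ι (eMap p ⟨_, l, q⟩).2.2 = _
    rw [eMap_spec]
    exact P.mul_comp p q
  have hz1 : ∀ w ∈ s1, ¬ P.Z (e w).2.2 := by
    intro w hw
    have hne := (Finset.mem_filter.1 hw).2
    rw [← P.zero_iff, hkey w hne]
    exact hne
  have hinj : Set.InjOn e s1 := by
    rintro ⟨⟨a, l, q⟩, hz⟩ hw ⟨⟨a', l', q'⟩, hz'⟩ hw' hee
    have ha : a = j := P.ι_src_eq q p (Finset.mem_filter.1 hw).2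
    have ha' : a' = j := P.ι_src_eq q' p (Finset.mem_filter.1 hw').2
    subst ha; subst ha'
    have hee' : eMap p ⟨_, l, q⟩ = eMap p ⟨_, l', q'⟩ := hee
    rw [eMap_spec p q, eMap_spec p q'] at hee'
    exact Subtype.ext (comp_bundled_inj p hee')
  have hsum1 : ∑ w ∈ s1, c w • P.ι (e w).2.2 = 0 := by
    have : ∑ w ∈ s1, c w • P.ι (e w).2.2 = (∑ w ∈ s1, c w • P.ι w.1.2.2) * P.ι p := by
      rw [Finset.sum_mul]
      refine Finset.sum_congr rfl fun w hw => ?_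
      rw [hkey w (Finset.mem_filter.1 hw).2, smul_mul_assoc]
    rw [this]
    have hx1 : (∑ w ∈ s1, c w • P.ι w.1.2.2) = x - ∑ w ∈ s0, c w • P.ι w.1.2.2 := by
      rw [hsplit, add_sub_cancel_left]
    rw [hx1, sub_mul, hx, h0p, sub_zero]
  have hzero : ∀ w ∈ s1, c w = 0 := P.li_fam s1 e hinj hz1 c hsum1
  have : (∑ w ∈ s1, c w • P.ι w.1.2.2) = 0 :=
    Finset.sum_eq_zero fun w hw => by rw [hzero w hw, zero_smul]
  rw [hsplit, this, add_zero]
  exact h0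

end MonomialPresentation
lemma prefix_comparable {V : Type w} [Quiver.{w} V] {j a : V} (q : Quiver.Path j a) :
    ∀ {l : V} (u : Quiver.Path a l) {b : V} (q' : Quiver.Path j b) (u' : Quiver.Path b l),
      q.comp u = q'.comp u' →
      (∃ v : Quiver.Path a b, q' = q.comp v) ∨ (∃ v : Quiver.Path b a, q = q'.comp v)
  | _, Quiver.Path.nil, b, q', u', h => Or.inr ⟨u', by rwa [Quiver.Path.comp_nil] at h⟩
  | _, Quiver.Path.cons u₀ e, b, q', u', h => by
    cases u' with
    | nil =>
      rw [Quiver.Path.comp_nil] at h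
      exact Or.inl ⟨Quiver.Path.cons u₀ e, h.symm⟩
    | cons u₀' e' =>
      rw [Quiver.Path.comp_cons, Quiver.Path.comp_cons] at h
      obtain rfl := Quiver.Path.obj_eq_of_cons_eq_cons h
      have h2 := eq_of_heq (Quiver.Path.heq_of_cons_eq_cons h)
      exact prefix_comparable q u₀ q' u₀' h2

namespace MonomialPresentation

open Quiver Submodule

variable {k : Type u} {A : Type v} {V : Type w}
  [Field k] [Ring A] [Algebra k A] [Quiver.{w} V] [Fintype V]
  (P : MonomialPresentation k A V)

lemma mul_mem_span (T : Set A)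
    (hT : ∀ (x : PathIn V), ∀ t ∈ T, P.ι x.2.2 * t ∈ Submodule.span k T) :
    ∀ (a : A), ∀ y ∈ Submodule.span k T, a * y ∈ Submodule.span k T := by
  have step1 : ∀ t ∈ T, ∀ a : A, a * t ∈ Submodule.span k T := by
    intro t ht a
    have ha : a ∈ Submodule.span k (Set.range (fun x : PathIn V => P.ι x.2.2)) := by
      rw [P.span_top]; trivial
    induction ha using Submodule.span_induction with
    | mem z hz => obtain ⟨x, rfl⟩ := hz; exact hT x t ht
    | zero => rw [zero_mul]; exact zero_mem _
    | add a b _ _ iha ihb => rw [add_mul]; exact add_mem iha ihb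
    | smul c a _ iha => rw [smul_mul_assoc]; exact Submodule.smul_mem _ _ iha
  intro a y hy
  induction hy using Submodule.span_induction with
  | mem t ht => exact step1 t ht a
  | zero => rw [mul_zero]; exact zero_mem _
  | add y z _ _ ihy ihz => rw [mul_add]; exact add_mem ihy ihz
  | smul c y _ ihy => rw [mul_smul_comm]; exact Submodule.smul_mem _ _ ihy

/-- The "cone" of a bundled path: all images of paths extending it on the left. -/
def coneSet (q : PathIn V) : Set A :=
  {a | ∃ (l : V) (u : Quiver.Path q.2.1 l), a = P.ι (q.2.2.comp u)}

lemma ι_mem_coneSet (q : PathIn V) : P.ι q.2.2 ∈ P.coneSet q :=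
  ⟨q.2.1, Quiver.Path.nil, by rw [Quiver.Path.comp_nil]⟩

lemma mul_cone_mem (q : PathIn V) (x : PathIn V) {t : A} (ht : t ∈ P.coneSet q) :
    P.ι x.2.2 * t ∈ Submodule.span k (P.coneSet q) := by
  obtain ⟨l, u, rfl⟩ := ht
  by_cases h : x.1 = l
  · obtain ⟨x1, x2, w⟩ := x
    dsimp only at h
    subst h
    rw [← P.mul_comp (q.2.2.comp u) w, Quiver.Path.comp_assoc]
    exact Submodule.subset_span ⟨x2, u.comp w, rfl⟩
  · rw [P.ι_mul_ι_of_ne _ _ h]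
    exact zero_mem _

lemma spanA_subset_cone (q : PathIn V) :
    (Submodule.span A {P.ι q.2.2} : Set A) ⊆ (Submodule.span k (P.coneSet q) : Set A) := by
  intro x hx
  obtain ⟨a, rfl⟩ := Submodule.mem_span_singleton.1 hx
  rw [smul_eq_mul]
  exact P.mul_mem_span _ (fun x t ht => P.mul_cone_mem q x ht) a _
    (Submodule.subset_span (P.ι_mem_coneSet q))

lemma cone_subset_spanA (q : PathIn V) :
    P.coneSet q ⊆ (Submodule.span A {P.ι q.2.2} : Set A) := by
  rintro _ ⟨l, u, rfl⟩
  rw [P.mul_comp]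
  exact Submodule.mem_span_singleton.2 ⟨P.ι u, by rw [smul_eq_mul]⟩

/-- The span of the images of the paths of length at least `n`. -/
def lenSpan (n : ℕ) : Submodule k A :=
  Submodule.span k {a | ∃ w : PathIn V, n ≤ w.2.2.length ∧ a = P.ι w.2.2}

lemma lenSpan_mul {m n : ℕ} {x y : A} (hx : x ∈ P.lenSpan m) (hy : y ∈ P.lenSpan n) :
    x * y ∈ P.lenSpan (m + n) := by
  induction hy using Submodule.span_induction with
  | mem t ht =>
    obtain ⟨w', hw', rfl⟩ := ht
    induction hx using Submodule.span_induction with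
    | mem z hz =>
      obtain ⟨w, hw, rfl⟩ := hz
      by_cases h : w.1 = w'.2.1
      · obtain ⟨x1, x2, u⟩ := w
        dsimp only at h
        subst h
        dsimp only at hw
        rw [← P.mul_comp w'.2.2 u]
        refine Submodule.subset_span ⟨⟨w'.1, x2, w'.2.2.comp u⟩, ?_, rfl⟩
        rw [Quiver.Path.length_comp]
        omega
      · rw [P.ι_mul_ι_of_ne _ _ h]
        exact zero_mem _
    | zero => rw [zero_mul]; exact zero_mem _
    | add a b _ _ iha ihb => rw [add_mul]; exact add_mem iha ihb
    | smul c a _ iha => rw [smul_mul_assoc]; exact Submodule.smul_mem _ _ iha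
  | zero => rw [mul_zero]; exact zero_mem _
  | add y z _ _ ihy ihz => rw [mul_add]; exact add_mem ihy ihz
  | smul c y _ ihy => rw [mul_smul_comm]; exact Submodule.smul_mem _ _ ihy

lemma lenSpan_exists_bot : ∃ d : ℕ, P.lenSpan d = ⊥ := by
  obtain ⟨d, hd⟩ := P.admissible
  refine ⟨d, le_bot_iff.1 (Submodule.span_le.2 ?_)⟩
  rintro _ ⟨w, hw, rfl⟩
  have := (P.zero_iff w.2.2).2 (hd _ hw)
  simp [this]

lemma lenSpan_anti {m n : ℕ} (h : m ≤ n) : P.lenSpan n ≤ P.lenSpan m :=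
  Submodule.span_mono (fun a => fun ⟨w, hw, ha⟩ => ⟨w, le_trans h hw, ha⟩)

end MonomialPresentation
namespace MonomialPresentation

open Quiver Submodule

variable {k : Type u} {A : Type v} {V : Type w}
  [Field k] [Ring A] [Algebra k A] [Quiver.{w} V] [Fintype V]
  (P : MonomialPresentation k A V)

lemma mem_bigK {i j : V} (p : Quiver.Path i j) :
    ∀ (n : ℕ) (w : PathIn V), w.2.2.length ≤ n → ¬ P.Z w.2.2 → w.1 = j →
      P.ι w.2.2 * P.ι p = 0 →
      P.ι w.2.2 ∈ (⨆ q ∈ P.LSet p, Submodule.span A {P.ι q.2.2}) := by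
  intro n
  induction n using Nat.strong_induction_on with
  | _ n IH =>
    intro w hlen hz hsrc hmul
    by_cases hL : w ∈ P.LSet p
    · exact le_biSup (fun q : PathIn V => Submodule.span A {P.ι q.2.2}) hL
        (Submodule.mem_span_singleton_self _)
    · have hD : ∃ r u : PathIn V, ¬ P.Z r.2.2 ∧ r.1 = j ∧ P.ι r.2.2 * P.ι p = 0 ∧
          1 ≤ u.2.2.length ∧ P.ι w.2.2 = P.ι u.2.2 * P.ι r.2.2 := by
        by_contra hD
        exact hL ⟨hz, hsrc, hmul, hD⟩
      obtain ⟨r, u, hzr, hrsrc, hrmul, hulen, hfac⟩ := hD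
      have hne : P.ι u.2.2 * P.ι r.2.2 ≠ 0 := fun h0 =>
        hz ((P.zero_iff _).1 (hfac.trans h0))
      obtain ⟨u1, u2, uq⟩ := u
      obtain ⟨r1, r2, rq⟩ := r
      dsimp only at hne hfac hulen hzr hrsrc hrmul
      have hsrceq : u1 = r2 := P.ι_src_eq uq rq hne
      subst hsrceq
      have hfacC : P.ι w.2.2 = P.ι (rq.comp uq) := by rw [hfac, ← P.mul_comp rq uq]
      have hweq : w = ⟨r1, u2, rq.comp uq⟩ := P.ι_inj hz hfacC
      have hlenw : w.2.2.length = rq.length + uq.length := by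
        rw [hweq]; exact Quiver.Path.length_comp rq uq
      have hrlt : rq.length < n := by omega
      have hmem : P.ι rq ∈ (⨆ q ∈ P.LSet p, Submodule.span A {P.ι q.2.2}) :=
        IH rq.length hrlt ⟨r1, _, rq⟩ le_rfl hzr hrsrc hrmul
      rw [hfac, ← smul_eq_mul]
      exact Submodule.smul_mem _ _ hmem

lemma lset_cone_disjoint {i j : V} (p : Quiver.Path i j) {q q' : PathIn V}
    (hq : q ∈ P.LSet p) (hq' : q' ∈ P.LSet p) (hne : q ≠ q') {w : PathIn V}
    (hw : ∃ (l : V) (u : Quiver.Path q.2.1 l), w = ⟨q.1, l, q.2.2.comp u⟩)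
    (hw' : ∃ (l : V) (u : Quiver.Path q'.2.1 l), w = ⟨q'.1, l, q'.2.2.comp u⟩) : False := by
  obtain ⟨l, u, rfl⟩ := hw
  obtain ⟨l', u', he⟩ := hw'
  obtain ⟨q1, q2, qq⟩ := q
  obtain ⟨q1', q2', q'q⟩ := q'
  obtain ⟨hz, hsrc, hmul, hmin⟩ := hq
  obtain ⟨hz', hsrc', hmul', hmin'⟩ := hq'
  dsimp only at hz hsrc hmul hmin hz' hsrc' hmul' hmin' he ⊢
  subst hsrc
  subst hsrc'
  obtain ⟨-, he2⟩ := Sigma.mk.inj_iff.1 he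
  obtain ⟨rfl, he3⟩ := Sigma.mk.inj_iff.1 (eq_of_heq he2)
  have hcomp : qq.comp u = q'q.comp u' := eq_of_heq he3
  rcases prefix_comparable qq u q'q u' hcomp with ⟨v, hv⟩ | ⟨v, hv⟩
  · cases v with
    | nil =>
      rw [Quiver.Path.comp_nil] at hv
      exact hne (by rw [hv])
    | cons v₀ ev =>
      refine hmin' ⟨⟨_, q2, qq⟩, ⟨q2, q2', v₀.cons ev⟩, hz, rfl, hmul, ?_, ?_⟩
      · simp [Quiver.Path.length_cons]
      · rw [hv, P.mul_comp]
  · cases v with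
    | nil =>
      rw [Quiver.Path.comp_nil] at hv
      exact hne (by rw [hv])
    | cons v₀ ev =>
      refine hmin ⟨⟨_, q2', q'q⟩, ⟨q2', q2, v₀.cons ev⟩, hz', rfl, hmul', ?_, ?_⟩
      · simp [Quiver.Path.length_cons]
      · rw [hv, P.mul_comp]

end MonomialPresentation
open MonomialPresentation in
/-- Lemma 3.1: for a nonzero nontrivial path `p` in a monomial algebra `A` there is an
exact sequence `0 → ⊕_{q ∈ L(p)} Aq → Ae_{t(p)} → Ap → 0`, where the surjection
`π_p` sends `e_{t(p)}` to `p` and the kernel is the (independent) sum of the left ideals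
`Aq`, `q ∈ L(p)`; moreover `π_p` is a projective cover of `Ap`. -/
theorem exact_sequence_for_cyclic_module (k : Type u) (A : Type v) (V : Type w)
    [Field k] [Ring A] [Algebra k A] [Quiver.{w} V] [Fintype V]
    (P : MonomialPresentation k A V) {i j : V} (p : Quiver.Path i j)
    (hp : ¬ P.Z p) (hlen : 1 ≤ p.length) :
    ∃ π : (Submodule.span A {P.ι (Quiver.Path.nil : Quiver.Path j j)}) →ₗ[A]
        (Submodule.span A {P.ι p}),
      (∀ x : Submodule.span A {P.ι (Quiver.Path.nil : Quiver.Path j j)},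
        (π x : A) = (x : A) * P.ι p) ∧
      Function.Surjective π ∧
      Submodule.map (Submodule.span A {P.ι (Quiver.Path.nil : Quiver.Path j j)}).subtype
          (LinearMap.ker π) =
        (⨆ q ∈ P.LSet p, Submodule.span A {P.ι q.2.2}) ∧
      iSupIndep (fun q : P.LSet p => Submodule.span A {P.ι q.1.2.2}) ∧
      Module.Projective A (Submodule.span A {P.ι (Quiver.Path.nil : Quiver.Path j j)}) ∧
      (∀ N : Submodule A (Submodule.span A {P.ι (Quiver.Path.nil : Quiver.Path j j)}),
        N ⊔ LinearMap.ker π = ⊤ → N = ⊤) := by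
  classical
  have hejj : P.ι (Quiver.Path.nil : Quiver.Path j j) * P.ι (Quiver.Path.nil : Quiver.Path j j)
      = P.ι (Quiver.Path.nil : Quiver.Path j j) := P.ι_mul_nil _
  have hejp : P.ι (Quiver.Path.nil : Quiver.Path j j) * P.ι p = P.ι p := P.nil_mul_ι p
  have hfix : ∀ x ∈ Submodule.span A {P.ι (Quiver.Path.nil : Quiver.Path j j)},
      x * P.ι (Quiver.Path.nil : Quiver.Path j j) = x := by
    intro x hx
    obtain ⟨a, rfl⟩ := Submodule.mem_span_singleton.1 hx
    rw [smul_eq_mul, mul_assoc, hejj]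
  let mulp : A →ₗ[A] A :=
    { toFun := fun a => a * P.ι p
      map_add' := fun a b => add_mul a b _
      map_smul' := fun r a => by simp only [smul_eq_mul, RingHom.id_apply, mul_assoc] }
  let π : (Submodule.span A {P.ι (Quiver.Path.nil : Quiver.Path j j)}) →ₗ[A]
      (Submodule.span A {P.ι p}) :=
    LinearMap.codRestrict _
      (mulp.comp (Submodule.span A {P.ι (Quiver.Path.nil : Quiver.Path j j)}).subtype)
      (fun c => Submodule.mem_span_singleton.2 ⟨(c : A), by rw [smul_eq_mul]; rfl⟩)
  refine ⟨π, fun x => rfl, ?_, ?_, ?_, ?_, ?_⟩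
  · -- surjectivity
    rintro ⟨y, hy⟩
    obtain ⟨a, rfl⟩ := Submodule.mem_span_singleton.1 hy
    refine ⟨⟨a * P.ι (Quiver.Path.nil : Quiver.Path j j),
      Submodule.mem_span_singleton.2 ⟨a, by rw [smul_eq_mul]⟩⟩, ?_⟩
    apply Subtype.ext
    show a * P.ι (Quiver.Path.nil : Quiver.Path j j) * P.ι p = a • P.ι p
    rw [mul_assoc, hejp, smul_eq_mul]
  · -- kernel
    apply le_antisymm
    · rintro x hx
      obtain ⟨⟨y, hy⟩, hyk, rfl⟩ := Submodule.mem_map.1 hx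
      have h1 : y * P.ι p = 0 := congrArg Subtype.val (LinearMap.mem_ker.1 hyk)
      have h2 : y * P.ι (Quiver.Path.nil : Quiver.Path j j) = y := hfix y hy
      have h3 := P.mem_span_ann p y h1
      have h4 : y ∈ Submodule.map
          (LinearMap.mulRight k (P.ι (Quiver.Path.nil : Quiver.Path j j)))
          (Submodule.span k {a : A | ∃ w : PathIn V,
            ¬ P.Z w.2.2 ∧ P.ι w.2.2 * P.ι p = 0 ∧ a = P.ι w.2.2}) := ⟨y, h3, h2⟩
      rw [Submodule.map_span] at h4
      have h5 : Submodule.span k ((LinearMap.mulRight k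
            (P.ι (Quiver.Path.nil : Quiver.Path j j))) ''
            {a : A | ∃ w : PathIn V, ¬ P.Z w.2.2 ∧ P.ι w.2.2 * P.ι p = 0 ∧ a = P.ι w.2.2}) ≤
          Submodule.restrictScalars k (⨆ q ∈ P.LSet p, Submodule.span A {P.ι q.2.2}) := by
        refine Submodule.span_le.2 ?_
        rintro _ ⟨_, ⟨w, hzw, hwp, rfl⟩, rfl⟩
        rw [SetLike.mem_coe, Submodule.restrictScalars_mem, LinearMap.mulRight_apply]
        by_cases hsw : w.1 = j
        · obtain ⟨w1, w2, wq⟩ := w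
          dsimp only at hsw hzw hwp
          subst hsw
          rw [P.ι_mul_nil]
          exact P.mem_bigK p wq.length ⟨w1, w2, wq⟩ le_rfl hzw rfl hwp
        · rw [P.ι_mul_ι_of_ne _ _ hsw]
          exact zero_mem _
      exact h5 h4
    · refine iSup₂_le fun q hq => ?_
      refine Submodule.span_le.2 (Set.singleton_subset_iff.2 ?_)
      obtain ⟨q1, q2, qq⟩ := q
      obtain ⟨hz, hsrc, hmul, -⟩ := hq
      dsimp only at hz hsrc hmul ⊢
      subst hsrc
      refine Submodule.mem_map.2 ⟨⟨P.ι qq, Submodule.mem_span_singleton.2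
        ⟨P.ι qq, by rw [smul_eq_mul]; exact P.ι_mul_nil qq⟩⟩, ?_, rfl⟩
      exact LinearMap.mem_ker.2 (Subtype.ext hmul)
  · -- independence
    intro q
    refine Submodule.disjoint_def.2 fun x hx hx' => ?_
    set vB : {y : PathIn V // ¬ P.Z y.2.2} → A := fun x => P.ι x.1.2.2 with hvB
    set S1 : Set {y : PathIn V // ¬ P.Z y.2.2} :=
      {w | ∃ (l : V) (u : Quiver.Path q.1.2.1 l), w.1 = ⟨q.1.1, l, q.1.2.2.comp u⟩} with hS1
    set S2 : Set {y : PathIn V // ¬ P.Z y.2.2} :=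
      {w | ∃ q' : P.LSet p, q' ≠ q ∧ ∃ (l : V) (u : Quiver.Path q'.1.2.1 l),
        w.1 = ⟨q'.1.1, l, q'.1.2.2.comp u⟩} with hS2
    have hdisj : Disjoint S1 S2 := by
      rw [Set.disjoint_left]
      rintro w ⟨l, u, hwu⟩ ⟨q', hne', l', u', hwu'⟩
      exact P.lset_cone_disjoint p q.2 q'.2
        (fun h => hne' (Subtype.ext h.symm)) ⟨l, u, hwu⟩ ⟨l', u', hwu'⟩
    have hx1 : x ∈ Submodule.span k (vB '' S1) := by
      have hc := P.spanA_subset_cone q.1 hx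
      refine Submodule.span_le.2 ?_ hc
      rintro _ ⟨l, u, rfl⟩
      by_cases hzz : P.Z (q.1.2.2.comp u)
      · rw [SetLike.mem_coe, (P.zero_iff _).2 hzz]
        exact zero_mem _
      · exact Submodule.subset_span ⟨⟨⟨q.1.1, l, q.1.2.2.comp u⟩, hzz⟩, ⟨l, u, rfl⟩, rfl⟩
    have hT : ∀ (z : PathIn V), ∀ t ∈ vB '' S2, P.ι z.2.2 * t ∈ Submodule.span k (vB '' S2) := by
      rintro z _ ⟨w, ⟨q', hne', l, u, hwu⟩, rfl⟩
      have hvw : vB w = P.ι (q'.1.2.2.comp u) := by rw [hvB]; dsimp only; rw [hwu]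
      rw [hvw]
      by_cases hzl : z.1 = l
      · obtain ⟨z1, z2, zq⟩ := z
        dsimp only at hzl ⊢
        subst hzl
        rw [← P.mul_comp (q'.1.2.2.comp u) zq, Quiver.Path.comp_assoc]
        by_cases hzz : P.Z (q'.1.2.2.comp (u.comp zq))
        · rw [(P.zero_iff _).2 hzz]
          exact zero_mem _
        · exact Submodule.subset_span ⟨⟨⟨q'.1.1, z2, q'.1.2.2.comp (u.comp zq)⟩, hzz⟩,
            ⟨q', hne', z2, u.comp zq, rfl⟩, rfl⟩
      · rw [P.ι_mul_ι_of_ne _ _ hzl]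
        exact zero_mem _
    have hx2 : x ∈ Submodule.span k (vB '' S2) := by
      let W : Submodule A A :=
        { carrier := (Submodule.span k (vB '' S2) : Set A)
          add_mem' := fun ha hb => add_mem ha hb
          zero_mem' := zero_mem _
          smul_mem' := fun a y hy => by
            rw [smul_eq_mul]
            exact P.mul_mem_span _ hT a y hy }
      have hsup : (⨆ (q' : P.LSet p) (_ : q' ≠ q), Submodule.span A {P.ι q'.1.2.2}) ≤ W := by
        refine iSup₂_le fun q' hne' => ?_
        refine Submodule.span_le.2 (Set.singleton_subset_iff.2 ?_)
        show P.ι q'.1.2.2 ∈ Submodule.span k (vB '' S2)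
        refine Submodule.subset_span ⟨⟨q'.1, q'.2.1⟩,
          ⟨q', hne', q'.1.2.1, Quiver.Path.nil, ?_⟩, rfl⟩
        rw [Quiver.Path.comp_nil]
      exact hsup hx'
    exact Submodule.disjoint_def.1 (P.indep.disjoint_span_image hdisj) x hx1 hx2
  · -- projectivity
    let mulej : A →ₗ[A] A :=
      { toFun := fun a => a * P.ι (Quiver.Path.nil : Quiver.Path j j)
        map_add' := fun a b => add_mul a b _
        map_smul' := fun r a => by simp only [smul_eq_mul, RingHom.id_apply, mul_assoc] }
    refine Module.Projective.of_split
      (Submodule.span A {P.ι (Quiver.Path.nil : Quiver.Path j j)}).subtype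
      (LinearMap.codRestrict _ mulej
        (fun c => Submodule.mem_span_singleton.2 ⟨c, by rw [smul_eq_mul]; rfl⟩)) ?_
    refine LinearMap.ext fun x => Subtype.ext ?_
    exact hfix x.1 x.2
  · -- projective cover
    intro N hN
    have hejmem : P.ι (Quiver.Path.nil : Quiver.Path j j) ∈
        Submodule.span A {P.ι (Quiver.Path.nil : Quiver.Path j j)} :=
      Submodule.mem_span_singleton_self _
    have htop : (⟨_, hejmem⟩ : Submodule.span A {P.ι (Quiver.Path.nil : Quiver.Path j j)}) ∈
        N ⊔ LinearMap.ker π := by rw [hN]; trivial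
    obtain ⟨n, hn, m, hm, hnm⟩ := Submodule.mem_sup.1 htop
    have hmp : (m : A) * P.ι p = 0 := congrArg Subtype.val (LinearMap.mem_ker.1 hm)
    have hmej : (m : A) * P.ι (Quiver.Path.nil : Quiver.Path j j) = m := hfix _ m.2
    have hm1 : (m : A) ∈ P.lenSpan 1 := by
      have h3 := P.mem_span_ann p (m : A) hmp
      have h4 : (m : A) ∈ Submodule.map
          (LinearMap.mulRight k (P.ι (Quiver.Path.nil : Quiver.Path j j)))
          (Submodule.span k {a : A | ∃ w : PathIn V,
            ¬ P.Z w.2.2 ∧ P.ι w.2.2 * P.ι p = 0 ∧ a = P.ι w.2.2}) := ⟨m, h3, hmej⟩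
      rw [Submodule.map_span] at h4
      refine Submodule.span_le.2 ?_ h4
      rintro _ ⟨_, ⟨w, hzw, hwp, rfl⟩, rfl⟩
      rw [SetLike.mem_coe, LinearMap.mulRight_apply]
      by_cases hsw : w.1 = j
      · obtain ⟨w1, w2, wq⟩ := w
        dsimp only at hsw hzw hwp
        subst hsw
        rw [P.ι_mul_nil]
        refine Submodule.subset_span ⟨⟨w1, w2, wq⟩, ?_, rfl⟩
        cases wq with
        | nil => exact absurd ((P.zero_iff p).1 ((P.nil_mul_ι p).symm.trans hwp)) hp
        | cons _ _ => simp [Quiver.Path.length_cons]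
      · rw [P.ι_mul_ι_of_ne _ _ hsw]
        exact zero_mem _
    obtain ⟨d, hd⟩ := P.lenSpan_exists_bot
    have hpow : ∀ t : ℕ, (m : A) ^ (t + 1) ∈ P.lenSpan (t + 1) := by
      intro t
      induction t with
      | zero => rw [pow_one]; exact hm1
      | succ t ih => rw [pow_succ]; exact P.lenSpan_mul ih hm1
    have hmd : (m : A) ^ (d + 1) = 0 := by
      have hmem := P.lenSpan_anti (Nat.le_succ d) (hpow d)
      rw [hd] at hmem
      exact (Submodule.mem_bot k).1 hmem
    have hgeo : ∀ t : ℕ, ∃ u : A,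
        u * (P.ι (Quiver.Path.nil : Quiver.Path j j) - (m : A)) =
          P.ι (Quiver.Path.nil : Quiver.Path j j) - (m : A) ^ (t + 1) := by
      intro t
      induction t with
      | zero => exact ⟨1, by rw [one_mul, pow_one]⟩
      | succ t ih =>
        obtain ⟨u, hu⟩ := ih
        refine ⟨u + (m : A) ^ (t + 1), ?_⟩
        have hmpow : (m : A) ^ (t + 1) * P.ι (Quiver.Path.nil : Quiver.Path j j)
            = (m : A) ^ (t + 1) := by
          rw [pow_succ, mul_assoc, hmej]
        rw [add_mul, hu, mul_sub, hmpow, ← pow_succ]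
        abel
    obtain ⟨u, hu⟩ := hgeo d
    rw [hmd, sub_zero] at hu
    have hnval : (n : A) = P.ι (Quiver.Path.nil : Quiver.Path j j) - (m : A) := by
      have hval := congrArg Subtype.val hnm
      push_cast at hval
      exact eq_sub_of_add_eq hval
    have hujn : u • n = (⟨_, hejmem⟩ :
        Submodule.span A {P.ι (Quiver.Path.nil : Quiver.Path j j)}) := by
      apply Subtype.ext
      show u * (n : A) = P.ι (Quiver.Path.nil : Quiver.Path j j)
      rw [hnval, hu]
    rw [eq_top_iff]
    rintro ⟨x, hx⟩ -
    obtain ⟨a, ha⟩ := Submodule.mem_span_singleton.1 hx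
    have hxa : (⟨x, hx⟩ : Submodule.span A {P.ι (Quiver.Path.nil : Quiver.Path j j)})
        = a • (u • n) := by
      rw [hujn]
      apply Subtype.ext
      show x = a • P.ι (Quiver.Path.nil : Quiver.Path j j)
      exact ha.symm
    rw [hxa]
    exact Submodule.smul_mem _ _ (Submodule.smul_mem _ _ hn)
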